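/- Let A be a real m × n matrix, b ∈ ℝ^m, μ > 0 and λ > 0, let 𝒢 be a partition of {1, …, n}, and define the group Lasso objective F : ℝ^n → ℝ by F(x) := μ‖Ax − b‖² + λ·Σ_{g∈𝒢} ‖x_g‖, where x_g is the subvector of x indexed by g. Assume inf_{x∈ℝ^n} F(x) > inf_{x∈ℝ^n} μ‖Ax − b‖². Then F is convex, and for every global minimizer x̄ of F there exist constants c > 0 and ε > 0 such that for every x ∈ ℝ^n with ‖x − x̄‖ ≤ ε and every ξ ∈ ℝ^n satisfying the subgradient inequality F(y) ≥ F(x) + ⟨ξ, y − x⟩ for all y ∈ ℝ^n, one has ‖ξ‖ ≥ c·(F(x) − F(x̄))^{1/2}. -/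

import Mathlib

open scoped RealInnerProductSpace
open Filter Topology


noncomputable def padL {n : ℕ} (g : Finset (Fin n)) :
    EuclideanSpace ℝ (Fin n) →ₗ[ℝ] EuclideanSpace ℝ (Fin n) where
  toFun x := WithLp.toLp 2 (fun i => if i ∈ g then x i else 0)
  map_add' x y := by ext i; by_cases h : i ∈ g <;> simp [h]
  map_smul' c x := by ext i; by_cases h : i ∈ g <;> simp [h]

lemma padL_apply {n : ℕ} (g : Finset (Fin n)) (x : EuclideanSpace ℝ (Fin n)) (i : Fin n) :
    padL g x i = if i ∈ g then x i else 0 := rfl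

lemma norm_padL {n : ℕ} (g : Finset (Fin n)) (x : EuclideanSpace ℝ (Fin n)) :
    ‖padL g x‖ = Real.sqrt (∑ i ∈ g, (x i)^2) := by
  rw [EuclideanSpace.norm_eq]
  congr 1
  have : ∀ i : Fin n, ‖padL g x i‖^2 = if i ∈ g then (x i)^2 else 0 := by
    intro i; by_cases h : i ∈ g <;> simp [padL, h]
  simp only [this, Finset.sum_ite_mem, Finset.univ_inter]

lemma norm_sq_eq {n : ℕ} (x : EuclideanSpace ℝ (Fin n)) : ‖x‖^2 = ∑ i, (x i)^2 := by
  rw [EuclideanSpace.norm_eq, Real.sq_sqrt (by positivity)]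
  congr 1; funext i; rw [Real.norm_eq_abs, sq_abs]

lemma padL_padL_eq {n : ℕ} (g : Finset (Fin n)) (x : EuclideanSpace ℝ (Fin n)) :
    padL g (padL g x) = padL g x := by
  ext i; by_cases h : i ∈ g <;> simp [padL, h]

lemma padL_padL_disj {n : ℕ} {g h : Finset (Fin n)} (hd : ∀ i, ¬(i ∈ g ∧ i ∈ h))
    (x : EuclideanSpace ℝ (Fin n)) : padL g (padL h x) = 0 := by
  ext i
  by_cases h1 : i ∈ g
  · have h2 : i ∉ h := fun h2 => hd i ⟨h1, h2⟩
    simp [padL, h1, h2]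
  · simp [padL, h1]

lemma norm_padL_le {n : ℕ} (g : Finset (Fin n)) (x : EuclideanSpace ℝ (Fin n)) :
    ‖padL g x‖ ≤ ‖x‖ := by
  rw [norm_padL, EuclideanSpace.norm_eq]
  apply Real.sqrt_le_sqrt
  have : ∀ i : Fin n, ‖x i‖^2 = (x i)^2 := fun i => by rw [Real.norm_eq_abs, sq_abs]
  simp only [this]
  exact Finset.sum_le_sum_of_subset_of_nonneg (Finset.subset_univ g)
    (fun i _ _ => by positivity)

lemma inner_padL {n : ℕ} (g : Finset (Fin n)) (a x : EuclideanSpace ℝ (Fin n)) :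
    ⟪padL g a, x⟫ = ⟪padL g a, padL g x⟫ := by
  simp only [PiLp.inner_apply, RCLike.inner_apply, conj_trivial]
  apply Finset.sum_congr rfl
  intro i _
  by_cases h : i ∈ g <;> simp [padL_apply, h]

lemma padL_inner_swap {n : ℕ} (g : Finset (Fin n)) (a x : EuclideanSpace ℝ (Fin n)) :
    ⟪padL g a, x⟫ = ⟪a, padL g x⟫ := by
  simp only [PiLp.inner_apply, RCLike.inner_apply, conj_trivial]
  apply Finset.sum_congr rfl
  intro i _
  by_cases h : i ∈ g <;> simp [padL_apply, h]

-- partition facts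
section partition
variable {n : ℕ} {G : Finset (Finset (Fin n))} (hG : ∀ i : Fin n, ∃! g, g ∈ G ∧ i ∈ g)

lemma part_sum (h : Fin n → ℝ) (hG : ∀ i : Fin n, ∃! g, g ∈ G ∧ i ∈ g) :
    ∑ g ∈ G, ∑ i ∈ g, h i = ∑ i, h i := by
  classical
  rw [← Finset.sum_biUnion]
  · apply Finset.sum_congr _ (fun _ _ => rfl)
    ext i
    simp only [Finset.mem_biUnion, Finset.mem_univ, iff_true, id]
    obtain ⟨g, ⟨hg1, hg2⟩, _⟩ := hG i
    exact ⟨g, hg1, hg2⟩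
  · intro g hg g' hg' hne
    apply Finset.disjoint_left.mpr
    intro i hig hig'
    exact hne ((hG i).unique ⟨hg, hig⟩ ⟨hg', hig'⟩)

lemma padL_sum_eq (x : EuclideanSpace ℝ (Fin n)) (hG : ∀ i : Fin n, ∃! g, g ∈ G ∧ i ∈ g) :
    ∑ g ∈ G, padL g x = x := by
  ext i
  rw [WithLp.ofLp_sum, Finset.sum_apply]
  obtain ⟨g, ⟨hg1, hg2⟩, hu⟩ := hG i
  rw [Finset.sum_eq_single g]
  · simp [padL_apply, hg2]
  · intro g' hg' hne
    have : i ∉ g' := fun h => hne (hu g' ⟨hg', h⟩)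
    simp [padL_apply, this]
  · intro h; exact absurd hg1 h

lemma norm_sq_split (x : EuclideanSpace ℝ (Fin n)) (hG : ∀ i : Fin n, ∃! g, g ∈ G ∧ i ∈ g) :
    ‖x‖^2 = ∑ g ∈ G, ‖padL g x‖^2 := by
  rw [norm_sq_eq, ← part_sum _ hG]
  apply Finset.sum_congr rfl
  intro g _
  rw [norm_padL, Real.sq_sqrt]
  positivity

end partition

noncomputable def mulVecL {m n : ℕ} (A : Matrix (Fin m) (Fin n) ℝ) :
    EuclideanSpace ℝ (Fin n) →ₗ[ℝ] EuclideanSpace ℝ (Fin m) where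
  toFun x := WithLp.toLp 2 (fun j => A.mulVec x j)
  map_add' x y := by
    ext j
    show A.mulVec (WithLp.ofLp x + WithLp.ofLp y) j = A.mulVec x j + A.mulVec y j
    rw [Matrix.mulVec_add]
    rfl
  map_smul' c x := by
    ext j
    show A.mulVec (c • WithLp.ofLp x) j = c * A.mulVec x j
    rw [Matrix.mulVec_smul]
    rfl

lemma mulVecL_apply {m n : ℕ} (A : Matrix (Fin m) (Fin n) ℝ) (x : EuclideanSpace ℝ (Fin n))
    (j : Fin m) : mulVecL A x j = A.mulVec x j := rfl

lemma norm_mulVecL {m n : ℕ} (A : Matrix (Fin m) (Fin n) ℝ) (x : EuclideanSpace ℝ (Fin n)) :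
    ‖mulVecL A x‖ = Real.sqrt (∑ j, (A.mulVec x j)^2) := by
  rw [EuclideanSpace.norm_eq]
  congr 1
  apply Finset.sum_congr rfl
  intro j _
  rw [Real.norm_eq_abs, sq_abs]
  rfl

lemma mulVec_coord {m n : ℕ} (A : Matrix (Fin m) (Fin n) ℝ) (x : EuclideanSpace ℝ (Fin n))
    (j : Fin m) : A.mulVec x j = ∑ i, A j i * x i := by
  simp [Matrix.mulVec, dotProduct]

lemma combo_coord {n : ℕ} (x y : EuclideanSpace ℝ (Fin n)) (a b : ℝ) (i : Fin n) :
    (a • x + b • y) i = a * x i + b * y i := rfl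

-- convexity of the full objective
lemma convexF {m n : ℕ} (A : Matrix (Fin m) (Fin n) ℝ) (b : Fin m → ℝ)
    (μ lam : ℝ) (hμ : 0 < μ) (hlam : 0 < lam)
    (G : Finset (Finset (Fin n)))
    (F : EuclideanSpace ℝ (Fin n) → ℝ)
    (hF : ∀ x, F x = μ * ∑ j, (A.mulVec x j - b j) ^ 2 +
        lam * ∑ g ∈ G, Real.sqrt (∑ i ∈ g, (x i) ^ 2)) :
    ConvexOn ℝ Set.univ F := by
  refine ⟨convex_univ, ?_⟩
  intro x _ y _ a c ha hc hac
  rw [hF, hF, hF]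
  have hmv : ∀ j, A.mulVec (a • x + c • y : EuclideanSpace ℝ (Fin n)) j = a * A.mulVec x j + c * A.mulVec y j := by
    intro j
    rw [mulVec_coord, mulVec_coord, mulVec_coord, Finset.mul_sum, Finset.mul_sum,
      ← Finset.sum_add_distrib]
    apply Finset.sum_congr rfl
    intro i _
    rw [combo_coord]
    ring
  have h1 : μ * ∑ j, (A.mulVec (a • x + c • y : EuclideanSpace ℝ (Fin n)) j - b j) ^ 2 ≤
      a * (μ * ∑ j, (A.mulVec x j - b j) ^ 2) + c * (μ * ∑ j, (A.mulVec y j - b j) ^ 2) := by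
    have hsum : ∑ j, (A.mulVec (a • x + c • y : EuclideanSpace ℝ (Fin n)) j - b j) ^ 2 ≤
        ∑ j, (a * (A.mulVec x j - b j) ^ 2 + c * (A.mulVec y j - b j) ^ 2) := by
      apply Finset.sum_le_sum
      intro j _
      rw [hmv j]
      have hrw : a * A.mulVec x j + c * A.mulVec y j - b j =
          a*(A.mulVec x j - b j) + c*(A.mulVec y j - b j) := by
        linear_combination (b j) * hac
      rw [hrw]
      set U := A.mulVec x j - b j
      set V := A.mulVec y j - b j
      have hid : a*U^2 + c*V^2 - (a*U + c*V)^2 = a*c*(U-V)^2 := by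
        linear_combination (-(a*U^2+c*V^2)) * hac
      have hnn := mul_nonneg (mul_nonneg ha hc) (sq_nonneg (U-V))
      linarith
    rw [Finset.sum_add_distrib, ← Finset.mul_sum, ← Finset.mul_sum] at hsum
    have := mul_le_mul_of_nonneg_left hsum (le_of_lt hμ)
    calc μ * ∑ j, (A.mulVec (a • x + c • y : EuclideanSpace ℝ (Fin n)) j - b j) ^ 2
        ≤ μ * (a * ∑ j, (A.mulVec x j - b j) ^ 2 + c * ∑ j, (A.mulVec y j - b j) ^ 2) := this
      _ = a * (μ * ∑ j, (A.mulVec x j - b j) ^ 2) + c * (μ * ∑ j, (A.mulVec y j - b j) ^ 2) := by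
          ring
  have h2 : lam * ∑ g ∈ G, Real.sqrt (∑ i ∈ g, ((a • x + c • y : EuclideanSpace ℝ (Fin n)) i) ^ 2) ≤
      a * (lam * ∑ g ∈ G, Real.sqrt (∑ i ∈ g, (x i) ^ 2)) +
      c * (lam * ∑ g ∈ G, Real.sqrt (∑ i ∈ g, (y i) ^ 2)) := by
    have hsum : ∑ g ∈ G, Real.sqrt (∑ i ∈ g, ((a • x + c • y : EuclideanSpace ℝ (Fin n)) i) ^ 2) ≤
        ∑ g ∈ G, (a * Real.sqrt (∑ i ∈ g, (x i) ^ 2) + c * Real.sqrt (∑ i ∈ g, (y i) ^ 2)) := by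
      apply Finset.sum_le_sum
      intro g _
      rw [← norm_padL, ← norm_padL, ← norm_padL, map_add, map_smul, map_smul]
      calc ‖a • padL g x + c • padL g y‖ ≤ ‖a • padL g x‖ + ‖c • padL g y‖ := norm_add_le _ _
        _ = a * ‖padL g x‖ + c * ‖padL g y‖ := by
            rw [norm_smul, norm_smul, Real.norm_eq_abs, Real.norm_eq_abs,
              abs_of_nonneg ha, abs_of_nonneg hc]
    rw [Finset.sum_add_distrib, ← Finset.mul_sum, ← Finset.mul_sum] at hsum
    have := mul_le_mul_of_nonneg_left hsum (le_of_lt hlam)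
    calc lam * ∑ g ∈ G, Real.sqrt (∑ i ∈ g, ((a • x + c • y : EuclideanSpace ℝ (Fin n)) i) ^ 2)
        ≤ lam * (a * ∑ g ∈ G, Real.sqrt (∑ i ∈ g, (x i) ^ 2) +
            c * ∑ g ∈ G, Real.sqrt (∑ i ∈ g, (y i) ^ 2)) := this
      _ = a * (lam * ∑ g ∈ G, Real.sqrt (∑ i ∈ g, (x i) ^ 2)) +
          c * (lam * ∑ g ∈ G, Real.sqrt (∑ i ∈ g, (y i) ^ 2)) := by ring
  simp only [smul_eq_mul]
  linarith

-- per-group projection onto the ray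
lemma group_proj {n : ℕ} (lam M : ℝ) (hlam : 0 < lam) (hM : 1 ≤ M)
    (γ u : EuclideanSpace ℝ (Fin n)) (hγ : ‖γ‖ ≤ lam) (hu : ‖u‖ ≤ M) :
    ∃ q : EuclideanSpace ℝ (Fin n), (∃ s : ℝ, q = s • γ) ∧
      (lam * ‖q‖ + ⟪γ, q⟫ = 0) ∧ (⟪γ, q⟫ ≤ 0) ∧ (‖γ‖ ≠ lam → q = 0) ∧
      ‖u - q‖^2 ≤ (if ‖γ‖ = lam then 2*M/lam else M/(lam - ‖γ‖)) * (lam * ‖u‖ + ⟪γ, u⟫) := by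
  have huno : 0 ≤ ‖u‖ := norm_nonneg u
  have hcs : |⟪γ, u⟫| ≤ ‖γ‖ * ‖u‖ := abs_real_inner_le_norm γ u
  by_cases hcase : ‖γ‖ = lam
  · -- ray case
    set st : ℝ := -⟪γ, u⟫ / lam with hst
    set σ : ℝ := max st 0 with hσ
    have hσ0 : 0 ≤ σ := le_max_right _ _
    refine ⟨(-σ/lam) • γ, ⟨-σ/lam, rfl⟩, ?_, ?_, fun h => absurd hcase h, ?_⟩
    · rw [norm_smul, real_inner_smul_right, real_inner_self_eq_norm_sq, hcase,
        Real.norm_eq_abs, abs_div, abs_neg, abs_of_nonneg hσ0, abs_of_pos hlam]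
      field_simp
      ring
    · rw [real_inner_smul_right, real_inner_self_eq_norm_sq, hcase]
      have : -σ/lam ≤ 0 := div_nonpos_of_nonpos_of_nonneg (by linarith) (le_of_lt hlam)
      nlinarith [sq_nonneg lam]
    · rw [if_pos hcase]
      have hexp : ‖u - (-σ/lam) • γ‖^2 = ‖u‖^2 - 2*(-σ/lam)*⟪u, γ⟫ + (σ/lam)^2*‖γ‖^2 := by
        rw [norm_sub_sq_real, real_inner_smul_right, norm_smul, Real.norm_eq_abs, abs_div,
          abs_neg, abs_of_nonneg hσ0, abs_of_pos hlam, mul_pow]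
        ring
      rw [hexp, hcase]
      have hγu : ⟪u, γ⟫ = ⟪γ, u⟫ := real_inner_comm γ u
      have hst_le : st ≤ ‖u‖ := by
        rw [hst, div_le_iff₀ hlam]
        have : -⟪γ, u⟫ ≤ ‖γ‖ * ‖u‖ := by
          have := neg_abs_le ⟪γ, u⟫
          nlinarith
        rw [hcase] at this
        nlinarith
      by_cases hsign : 0 ≤ st
      · have hσst : σ = st := max_eq_left hsign
        have hinner : ⟪γ, u⟫ = -st * lam := by rw [hst]; field_simp
        rw [hγu, hinner, hσst]
        have h2M : ‖u‖ + st ≤ 2*M := by linarith [hst_le.trans hu]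
        have hfac : ‖u‖^2 - 2*(-st/lam)*(-st*lam) + (st/lam)^2*lam^2
            = (‖u‖ - st) * (‖u‖ + st) := by field_simp; ring
        rw [hfac]
        have hBnn : 0 ≤ ‖u‖ - st := by linarith
        have hrhs : 2*M/lam * (lam * ‖u‖ + -st*lam) = (‖u‖ - st) * (2*M) := by
          field_simp; ring
        rw [hrhs]
        apply mul_le_mul_of_nonneg_left h2M hBnn
      · push_neg at hsign
        have hσ0' : σ = 0 := max_eq_right (le_of_lt hsign)
        have hBpos : lam * ‖u‖ ≤ lam * ‖u‖ + ⟪γ, u⟫ := by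
          have : ⟪γ, u⟫ > 0 := by
            rw [hst] at hsign
            have := div_neg_iff.mp hsign
            rcases this with ⟨h1, h2⟩ | ⟨h1, h2⟩
            · linarith
            · linarith
          linarith
        have huM : ‖u‖^2 ≤ M * ‖u‖ := by nlinarith
        have hMu : M * ‖u‖ ≤ 2*M/lam * (lam * ‖u‖ + ⟪γ, u⟫) := by
          rw [div_mul_eq_mul_div, le_div_iff₀ hlam]
          nlinarith
        rw [hγu, hσ0']
        have hclean : ‖u‖ ^ 2 - 2 * (-0 / lam) * ⟪γ, u⟫ + ((0:ℝ) / lam) ^ 2 * lam ^ 2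
            = ‖u‖ ^ 2 := by ring
        rw [hclean]
        linarith
  · -- interior case
    have hγlt : ‖γ‖ < lam := lt_of_le_of_ne hγ hcase
    refine ⟨0, ⟨0, by rw [zero_smul]⟩, by simp, by simp, fun _ => rfl, ?_⟩
    rw [if_neg hcase, sub_zero]
    have hB : (lam - ‖γ‖) * ‖u‖ ≤ lam * ‖u‖ + ⟪γ, u⟫ := by
      have : -⟪γ, u⟫ ≤ ‖γ‖ * ‖u‖ := by
        have := neg_abs_le ⟪γ, u⟫
        nlinarith
      nlinarith
    have huM : ‖u‖^2 ≤ M * ‖u‖ := by nlinarith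
    rw [div_mul_eq_mul_div, le_div_iff₀ (by linarith)]
    nlinarith

lemma hoffman {N M : ℕ} (T : EuclideanSpace ℝ (Fin N) →ₗ[ℝ] EuclideanSpace ℝ (Fin M))
    {ι : Type} (φ : ι → (EuclideanSpace ℝ (Fin N) →ₗ[ℝ] ℝ))
    (V : Submodule ℝ (EuclideanSpace ℝ (Fin N))) (s : Finset ι) :
    ∃ κ : ℝ, 0 < κ ∧ ∀ v ∈ V, (∀ i ∈ s, 0 ≤ φ i v) →
      ∃ k ∈ V, T k = 0 ∧ (∀ i ∈ s, 0 ≤ φ i k) ∧ ‖v - k‖ ≤ κ * ‖T v‖ := by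
  classical
  suffices H : ∀ d : ℕ, ∀ (V : Submodule ℝ (EuclideanSpace ℝ (Fin N))) (s : Finset ι),
      Module.finrank ℝ V + s.card ≤ d →
      ∃ κ : ℝ, 0 < κ ∧ ∀ v ∈ V, (∀ i ∈ s, 0 ≤ φ i v) →
        ∃ k ∈ V, T k = 0 ∧ (∀ i ∈ s, 0 ≤ φ i k) ∧ ‖v - k‖ ≤ κ * ‖T v‖ by
    exact H _ V s le_rfl
  intro d
  induction d using Nat.strong_induction_on with
  | _ d IH =>
  intro V s hd
  by_contra hcon
  push_neg at hcon
  -- extract a sequence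
  have hseq : ∀ j : ℕ, ∃ v ∈ V, (∀ i ∈ s, 0 ≤ φ i v) ∧
      ∀ k ∈ V, T k = 0 → (∀ i ∈ s, 0 ≤ φ i k) → ((j:ℝ)+1) * ‖T v‖ < ‖v - k‖ :=
    fun j => hcon ((j:ℝ)+1) (by positivity)
  choose v hvV hvφ hvk using hseq
  have hTv : ∀ j, T (v j) ≠ 0 := by
    intro j h0
    have h := hvk j (v j) (hvV j) h0 (hvφ j)
    rw [sub_self, h0] at h
    simp at h
  have hvne : ∀ j, v j ≠ 0 := fun j h => hTv j (by rw [h, map_zero])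
  have hnv : ∀ j, (0:ℝ) < ‖v j‖ := fun j => norm_pos_iff.mpr (hvne j)
  set u : ℕ → EuclideanSpace ℝ (Fin N) := fun j => (‖v j‖)⁻¹ • v j with hu_def
  have hu_norm : ∀ j, ‖u j‖ = 1 := fun j => norm_smul_inv_norm (hvne j)
  have hveq : ∀ j, v j = ‖v j‖ • u j := by
    intro j
    rw [hu_def, smul_smul, mul_inv_cancel₀ (ne_of_gt (hnv j)), one_smul]
  have huV : ∀ j, u j ∈ V := fun j => Submodule.smul_mem V _ (hvV j)
  have huφ : ∀ j, ∀ i ∈ s, 0 ≤ φ i (u j) := by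
    intro j i hi
    rw [hu_def]
    simp only [map_smul, smul_eq_mul]
    exact mul_nonneg (by positivity) (hvφ j i hi)
  have hTu_ne : ∀ j, T (u j) ≠ 0 := by
    intro j h
    apply hTv j
    rw [hveq j, map_smul, h, smul_zero]
  have hTu_pos : ∀ j, 0 < ‖T (u j)‖ := fun j => norm_pos_iff.mpr (hTu_ne j)
  have huk : ∀ j : ℕ, ∀ k ∈ V, T k = 0 → (∀ i ∈ s, 0 ≤ φ i k) →
      ((j:ℝ)+1) * ‖T (u j)‖ < ‖u j - k‖ := by
    intro j k hkV hTk hkφ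
    have h1 := hvk j (‖v j‖ • k) (Submodule.smul_mem V _ hkV)
      (by rw [map_smul, hTk, smul_zero])
      (fun i hi => by
        rw [map_smul, smul_eq_mul]
        exact mul_nonneg (norm_nonneg _) (hkφ i hi))
    have h2 : ‖v j - ‖v j‖ • k‖ = ‖v j‖ * ‖u j - k‖ := by
      have h4 : v j - ‖v j‖ • k = ‖v j‖ • (u j - k) := by
        rw [smul_sub, ← hveq j]
      rw [h4, norm_smul, Real.norm_eq_abs, abs_of_pos (hnv j)]
    have h3 : ‖T (v j)‖ = ‖v j‖ * ‖T (u j)‖ := by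
      conv_lhs => rw [hveq j]
      rw [map_smul, norm_smul, Real.norm_eq_abs, abs_of_pos (hnv j)]
    rw [h2, h3] at h1
    have h5 : ‖v j‖ * (((j:ℝ)+1) * ‖T (u j)‖) < ‖v j‖ * ‖u j - k‖ := by
      calc ‖v j‖ * (((j:ℝ)+1) * ‖T (u j)‖) = ((j:ℝ)+1) * (‖v j‖ * ‖T (u j)‖) := by ring
      _ < ‖v j‖ * ‖u j - k‖ := h1
    exact lt_of_mul_lt_mul_left h5 (norm_nonneg _)
  have hTu_small : ∀ j, ‖T (u j)‖ < 1/((j:ℝ)+1) := by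
    intro j
    have h := huk j 0 (Submodule.zero_mem V) (map_zero T) (fun i _ => by rw [map_zero])
    rw [sub_zero, hu_norm j] at h
    rw [lt_div_iff₀ (by positivity)]
    calc ‖T (u j)‖ * ((j:ℝ)+1) = ((j:ℝ)+1) * ‖T (u j)‖ := by ring
    _ < 1 := h
  -- compactness
  have hmem : ∀ j, u j ∈ Metric.sphere (0 : EuclideanSpace ℝ (Fin N)) 1 := fun j => by
    rw [mem_sphere_zero_iff_norm]; exact hu_norm j
  obtain ⟨w, hw_mem, ψ, hψ, hconv⟩ :=
    (isCompact_sphere (0 : EuclideanSpace ℝ (Fin N)) 1).tendsto_subseq hmem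
  have hw_norm : ‖w‖ = 1 := mem_sphere_zero_iff_norm.mp hw_mem
  have hwV : w ∈ V := by
    have hc : IsClosed (V : Set (EuclideanSpace ℝ (Fin N))) := Submodule.closed_of_finiteDimensional V
    exact hc.mem_of_tendsto hconv (Eventually.of_forall (fun j => huV _))
  have hψle : ∀ j : ℕ, ((j:ℝ)+1) ≤ ((ψ j : ℝ)+1) := by
    intro j
    have h : j ≤ ψ j := hψ.le_apply
    have : (j:ℝ) ≤ (ψ j : ℝ) := by exact_mod_cast h
    linarith
  have hTu_small' : ∀ j, ‖T (u (ψ j))‖ ≤ 1/((j:ℝ)+1) := by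
    intro j
    refine le_trans (le_of_lt (hTu_small (ψ j))) ?_
    apply one_div_le_one_div_of_le (by positivity) (hψle j)
  have hTcont : Continuous T := T.continuous_of_finiteDimensional
  have hTw : T w = 0 := by
    have h1 : Tendsto (fun j => T (u (ψ j))) atTop (𝓝 (T w)) := (hTcont.tendsto w).comp hconv
    have h2 : Tendsto (fun j => T (u (ψ j))) atTop (𝓝 0) := by
      rw [tendsto_zero_iff_norm_tendsto_zero]
      exact squeeze_zero (fun j => norm_nonneg _) hTu_small'
        tendsto_one_div_add_atTop_nhds_zero_nat
    exact tendsto_nhds_unique h1 h2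
  have hφtend : ∀ i, Tendsto (fun j => φ i (u (ψ j))) atTop (𝓝 (φ i w)) := fun i =>
    (((φ i).continuous_of_finiteDimensional).tendsto w).comp hconv
  have hwφ : ∀ i ∈ s, 0 ≤ φ i w := fun i hi =>
    ge_of_tendsto' (hφtend i) (fun j => huφ (ψ j) i hi)
  by_cases hpos : ∃ i ∈ s, 0 < φ i w
  · -- Branch B : drop one inequality
    obtain ⟨i, his, hφw⟩ := hpos
    have hcard : Module.finrank ℝ V + (s.erase i).card < d := by
      have h1 := Finset.card_erase_of_mem his
      have h2 : 1 ≤ s.card := Finset.card_pos.mpr ⟨i, his⟩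
      omega
    obtain ⟨κ', hκ'pos, H'⟩ := IH _ hcard V (s.erase i) le_rfl
    set φc := LinearMap.toContinuousLinearMap (φ i) with hφc
    have hφc_apply : ∀ z, φc z = φ i z := fun z => rfl
    set a := φ i w with ha
    -- eventual conditions
    have hev1 : ∀ᶠ j : ℕ in atTop, a/2 < φ i (u (ψ j)) :=
      (hφtend i).eventually_const_lt (by linarith)
    have hev2 : ∀ᶠ j : ℕ in atTop, (‖φc‖+1) * κ' * (1/((j:ℝ)+1)) < a/2 := by
      have h0 : Tendsto (fun j : ℕ => (‖φc‖+1) * κ' * (1/((j:ℝ)+1))) atTop (𝓝 (((‖φc‖+1) * κ') * 0)) :=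
        tendsto_one_div_add_atTop_nhds_zero_nat.const_mul _
      rw [mul_zero] at h0
      exact h0.eventually_lt_const (by linarith)
    have hev3 : ∀ᶠ j : ℕ in atTop, κ' ≤ ((j:ℝ)+1) := by
      obtain ⟨j0, hj0⟩ := exists_nat_ge κ'
      refine eventually_atTop.mpr ⟨j0, fun j hj => ?_⟩
      have : (j0:ℝ) ≤ (j:ℝ) := by exact_mod_cast hj
      linarith
    obtain ⟨j, hj1, hj2, hj3⟩ := (hev1.and (hev2.and hev3)).exists
    obtain ⟨k, hkV, hTk, hkφ', hkle⟩ := H' (u (ψ j)) (huV (ψ j))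
      (fun i' hi' => huφ (ψ j) i' (Finset.mem_of_mem_erase hi'))
    have hkle2 : ‖u (ψ j) - k‖ ≤ κ' * (1/((j:ℝ)+1)) :=
      le_trans hkle (mul_le_mul_of_nonneg_left (hTu_small' j) (le_of_lt hκ'pos))
    have hφik : 0 ≤ φ i k := by
      have hb : |φ i (u (ψ j)) - φ i k| ≤ ‖φc‖ * ‖u (ψ j) - k‖ := by
        have : φ i (u (ψ j)) - φ i k = φc (u (ψ j) - k) := by
          rw [hφc_apply, map_sub]
        rw [this, ← Real.norm_eq_abs]
        exact φc.le_opNorm _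
      have hb2 : ‖φc‖ * ‖u (ψ j) - k‖ ≤ (‖φc‖+1) * (κ' * (1/((j:ℝ)+1))) := by
        apply mul_le_mul (by linarith) hkle2 (norm_nonneg _) (by positivity)
      have hb3 : φ i (u (ψ j)) - φ i k ≤ (‖φc‖+1) * κ' * (1/((j:ℝ)+1)) := by
        calc φ i (u (ψ j)) - φ i k ≤ |φ i (u (ψ j)) - φ i k| := le_abs_self _
        _ ≤ (‖φc‖+1) * (κ' * (1/((j:ℝ)+1))) := le_trans hb hb2
        _ = (‖φc‖+1) * κ' * (1/((j:ℝ)+1)) := by ring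
      linarith
    have hkφfull : ∀ i' ∈ s, 0 ≤ φ i' k := by
      intro i' hi'
      by_cases h : i' = i
      · subst h; exact hφik
      · exact hkφ' i' (Finset.mem_erase.mpr ⟨h, hi'⟩)
    have hcontr := huk (ψ j) k hkV hTk hkφfull
    have hchain : ((ψ j:ℝ)+1) * ‖T (u (ψ j))‖ < κ' * ‖T (u (ψ j))‖ := by
      calc ((ψ j:ℝ)+1) * ‖T (u (ψ j))‖ < ‖u (ψ j) - k‖ := hcontr
      _ ≤ κ' * ‖T (u (ψ j))‖ := hkle
    have h7 : ((ψ j:ℝ)+1) < κ' := lt_of_mul_lt_mul_right hchain (le_of_lt (hTu_pos (ψ j)))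
    have h8 := hψle j
    linarith
  · -- Branch A : cut dimension
    push_neg at hpos
    have hzero : ∀ i ∈ s, φ i w = 0 := fun i hi => le_antisymm (hpos i hi) (hwφ i hi)
    set V' := V ⊓ (ℝ ∙ w)ᗮ with hV'
    have hwnotV' : w ∉ V' := by
      intro h
      have h2 := (Submodule.mem_inf.mp h).2
      have h3 : ⟪w, w⟫ = 0 :=
        (Submodule.mem_orthogonal _ w).mp h2 w (Submodule.mem_span_singleton_self w)
      rw [real_inner_self_eq_norm_sq, hw_norm] at h3
      norm_num at h3
    have hlt : V' < V := lt_of_le_of_ne inf_le_left (fun h => hwnotV' (h.symm ▸ hwV))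
    have hrank := Submodule.finrank_lt_finrank_of_lt hlt
    have hcard : Module.finrank ℝ V' + s.card < d := by omega
    obtain ⟨κ', hκ'pos, H'⟩ := IH _ hcard V' s le_rfl
    obtain ⟨j, hjκ⟩ := exists_nat_ge κ'
    set c := ⟪u j, w⟫ with hc
    set y := u j - c • w with hy
    have hyV' : y ∈ V' := by
      rw [hV', Submodule.mem_inf]
      constructor
      · exact Submodule.sub_mem V (huV j) (Submodule.smul_mem V c hwV)
      · rw [Submodule.mem_orthogonal]
        intro z hz
        obtain ⟨t, rfl⟩ := Submodule.mem_span_singleton.mp hz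
        rw [real_inner_smul_left]
        have hww : ⟪w, w⟫ = 1 := by
          rw [real_inner_self_eq_norm_sq, hw_norm]; norm_num
        have h2 : ⟪w, c • w⟫ = c := by rw [real_inner_smul_right, hww, mul_one]
        have hthis : ⟪w, y⟫ = 0 := by
          rw [hy, inner_sub_right, h2, hc, real_inner_comm, sub_self]
        rw [hthis, mul_zero]
    have hyφ : ∀ i ∈ s, 0 ≤ φ i y := by
      intro i hi
      have hsm : φ i (c • w) = c * φ i w := by rw [map_smul, smul_eq_mul]
      rw [hy, map_sub, hsm, hzero i hi, mul_zero, sub_zero]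
      exact huφ j i hi
    obtain ⟨k', hk'V', hTk', hk'φ, hk'le⟩ := H' y hyV' hyφ
    have hTy : T y = T (u j) := by
      have hsm : T (c • w) = c • T w := map_smul T c w
      rw [hy, map_sub, hsm, hTw, smul_zero, sub_zero]
    set k := c • w + k' with hk
    have hkV : k ∈ V := Submodule.add_mem V (Submodule.smul_mem V c hwV)
      ((Submodule.mem_inf.mp hk'V').1)
    have hTk : T k = 0 := by
      have hsm : T (c • w) = c • T w := map_smul T c w
      rw [hk, map_add, hsm, hTw, smul_zero, hTk', zero_add]
    have hkφ : ∀ i ∈ s, 0 ≤ φ i k := by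
      intro i hi
      have hsm : φ i (c • w) = c * φ i w := by rw [map_smul, smul_eq_mul]
      rw [hk, map_add, hsm, hzero i hi, mul_zero, zero_add]
      exact hk'φ i hi
    have hdiff : u j - k = y - k' := by rw [hy, hk]; abel
    have hcontr := huk j k hkV hTk hkφ
    rw [hdiff] at hcontr
    have hchain : ((j:ℝ)+1) * ‖T (u j)‖ < κ' * ‖T (u j)‖ := by
      calc ((j:ℝ)+1) * ‖T (u j)‖ < ‖y - k'‖ := hcontr
      _ ≤ κ' * ‖T y‖ := hk'le
      _ = κ' * ‖T (u j)‖ := by rw [hTy]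
    have h7 : ((j:ℝ)+1) < κ' := lt_of_mul_lt_mul_right hchain (le_of_lt (hTu_pos j))
    linarith
set_option maxHeartbeats 2000000 in
/-- The group Lasso objective `F(x) = μ‖Ax − b‖² + λ·Σ_{g∈𝒢} ‖x_g‖`,
under the assumption that its infimum strictly exceeds that of the unregularized
least squares, is convex and satisfies the KL inequality with exponent `1/2`
around every global minimizer. -/
theorem groupLasso_KL_exponent_half
    (m n : ℕ) (A : Matrix (Fin m) (Fin n) ℝ) (b : Fin m → ℝ)
    (μ lam : ℝ) (hμ : 0 < μ) (hlam : 0 < lam)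
    (G : Finset (Finset (Fin n)))
    (hG : ∀ i : Fin n, ∃! g, g ∈ G ∧ i ∈ g)
    (F : EuclideanSpace ℝ (Fin n) → ℝ)
    (hF : ∀ x, F x = μ * ∑ j, (A.mulVec x j - b j) ^ 2 +
        lam * ∑ g ∈ G, Real.sqrt (∑ i ∈ g, (x i) ^ 2))
    (hinf : (⨅ x : EuclideanSpace ℝ (Fin n), μ * ∑ j, (A.mulVec x j - b j) ^ 2) <
        ⨅ x : EuclideanSpace ℝ (Fin n), F x) :
    ConvexOn ℝ Set.univ F ∧
    ∀ xbar : EuclideanSpace ℝ (Fin n), (∀ x, F xbar ≤ F x) →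
      ∃ c > (0 : ℝ), ∃ ε > (0 : ℝ),
        ∀ x : EuclideanSpace ℝ (Fin n), ‖x - xbar‖ ≤ ε →
          ∀ ξ : EuclideanSpace ℝ (Fin n),
            (∀ y : EuclideanSpace ℝ (Fin n), F x + ⟪ξ, y - x⟫ ≤ F y) →
            c * Real.sqrt (F x - F xbar) ≤ ‖ξ‖ := by
  classical
  constructor
  · exact convexF A b μ lam hμ hlam G F hF
  intro xbar hmin
  -- disjointness of distinct groups
  have hdisj : ∀ g ∈ G, ∀ h' ∈ G, h' ≠ g → ∀ i, ¬(i ∈ h' ∧ i ∈ g) := by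
    intro g hg h' hh' hne i hi
    exact hne ((hG i).unique ⟨hh', hi.1⟩ ⟨hg, hi.2⟩)
  -- the gradient of the smooth part at xbar
  set gbar : EuclideanSpace ℝ (Fin n) :=
    WithLp.toLp 2 (fun i => 2*μ* ∑ j, (A.mulVec xbar j - b j) * A j i) with hgbar
  have hgbar_apply : ∀ i, gbar i = 2*μ* ∑ j, (A.mulVec xbar j - b j) * A j i := fun i => rfl
  set r : EuclideanSpace ℝ (Fin n) → ℝ := fun x => lam * ∑ g ∈ G, ‖padL g x‖ with hr
  have hFr : ∀ x, F x = μ * ∑ j, (A.mulVec x j - b j)^2 + r x := by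
    intro x
    rw [hF, hr]
    congr 2
    apply Finset.sum_congr rfl
    intro g _
    rw [norm_padL]
  set Sq : EuclideanSpace ℝ (Fin n) → ℝ := fun v => ∑ j, (A.mulVec v j)^2 with hSqdef
  have hSqnn : ∀ v, 0 ≤ Sq v := fun v => Finset.sum_nonneg (fun j _ => sq_nonneg _)
  set Df : EuclideanSpace ℝ (Fin n) → ℝ :=
    fun y => r y - r xbar + ⟪gbar, y - xbar⟫ with hDf
  -- the cross term
  have hcross : ∀ d : EuclideanSpace ℝ (Fin n),
      ⟪gbar, d⟫ = 2*μ * ∑ j, (A.mulVec xbar j - b j) * (A.mulVec d j) := by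
    intro d
    rw [PiLp.inner_apply]
    simp only [RCLike.inner_apply, conj_trivial]
    rw [show (∑ i, d i * gbar i) = ∑ i, gbar i * d i from
      Finset.sum_congr rfl (fun i _ => mul_comm _ _)]
    calc ∑ i, gbar i * d i
        = ∑ i, ∑ j, 2*μ*((A.mulVec xbar j - b j) * (A j i * d i)) := by
          apply Finset.sum_congr rfl
          intro i _
          rw [hgbar_apply i, mul_assoc, Finset.sum_mul, Finset.mul_sum]
          apply Finset.sum_congr rfl
          intro j _
          ring
      _ = ∑ j, ∑ i, 2*μ*((A.mulVec xbar j - b j) * (A j i * d i)) := Finset.sum_comm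
      _ = 2*μ * ∑ j, (A.mulVec xbar j - b j) * (A.mulVec d j) := by
          rw [Finset.mul_sum]
          apply Finset.sum_congr rfl
          intro j _
          rw [mulVec_coord A d j, Finset.mul_sum, Finset.mul_sum]
  -- fundamental expansion
  have hkey : ∀ y, F y = F xbar + μ * Sq (y - xbar) + Df y := by
    intro y
    have hsub : ∀ j, A.mulVec y j - b j =
        (A.mulVec xbar j - b j) + A.mulVec (y - xbar : EuclideanSpace ℝ (Fin n)) j := by
      intro j
      rw [mulVec_coord A y j, mulVec_coord A xbar j, mulVec_coord A (y - xbar) j]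
      have hptw : ∀ i : Fin n, (y - xbar : EuclideanSpace ℝ (Fin n)) i = y i - xbar i := fun i => rfl
      simp only [hptw, mul_sub]
      rw [Finset.sum_sub_distrib]
      ring
    have hexp : ∑ j, (A.mulVec y j - b j)^2 =
        ∑ j, (A.mulVec xbar j - b j)^2 + Sq (y - xbar)
        + 2 * ∑ j, (A.mulVec xbar j - b j) * A.mulVec (y - xbar : EuclideanSpace ℝ (Fin n)) j := by
      have h1 : ∑ j, (A.mulVec y j - b j)^2
          = ∑ j, ((A.mulVec xbar j - b j)^2 + (A.mulVec (y-xbar : EuclideanSpace ℝ (Fin n)) j)^2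
              + 2*((A.mulVec xbar j - b j) * A.mulVec (y - xbar : EuclideanSpace ℝ (Fin n)) j)) := by
        apply Finset.sum_congr rfl
        intro j _
        rw [hsub j]
        ring
      rw [h1, Finset.sum_add_distrib, Finset.sum_add_distrib, ← Finset.mul_sum]
    have hcr := hcross (y - xbar)
    rw [hFr y, hFr xbar, hexp]
    simp only [hDf]
    linear_combination (-1 : ℝ) * hcr
  -- the Bregman-type gap is nonnegative
  have hD0 : ∀ y, 0 ≤ Df y := by
    intro y
    by_contra hneg
    push_neg at hneg
    set C := μ * Sq (y - xbar) with hC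
    have hC0 : 0 ≤ C := mul_nonneg hμ.le (hSqnn _)
    set t := min 1 ((-Df y)/(C+1)) with ht
    have ht0 : 0 < t := lt_min one_pos (div_pos (by linarith) (by linarith))
    have ht1 : t ≤ 1 := min_le_left _ _
    have hcomb : Df (xbar + t • (y - xbar)) ≤ t * Df y := by
      have hz : xbar + t • (y - xbar) = (1-t) • xbar + t • y := by module
      have hrz : r (xbar + t • (y - xbar)) ≤ (1-t) * r xbar + t * r y := by
        rw [hz, hr]
        have hsum : ∑ g ∈ G, ‖padL g ((1-t) • xbar + t • y)‖ ≤
            ∑ g ∈ G, ((1-t) * ‖padL g xbar‖ + t * ‖padL g y‖) := by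
          apply Finset.sum_le_sum
          intro g _
          rw [map_add, map_smul, map_smul]
          calc ‖(1-t) • padL g xbar + t • padL g y‖
              ≤ ‖(1-t) • padL g xbar‖ + ‖t • padL g y‖ := norm_add_le _ _
            _ = (1-t) * ‖padL g xbar‖ + t * ‖padL g y‖ := by
                rw [norm_smul, norm_smul, Real.norm_eq_abs, Real.norm_eq_abs,
                  abs_of_nonneg (by linarith : (0:ℝ) ≤ 1-t), abs_of_nonneg ht0.le]
        rw [Finset.sum_add_distrib, ← Finset.mul_sum, ← Finset.mul_sum] at hsum
        have := mul_le_mul_of_nonneg_left hsum hlam.le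
        calc lam * ∑ g ∈ G, ‖padL g ((1-t) • xbar + t • y)‖
            ≤ lam * ((1-t) * ∑ g ∈ G, ‖padL g xbar‖ + t * ∑ g ∈ G, ‖padL g y‖) := this
          _ = (1-t) * (lam * ∑ g ∈ G, ‖padL g xbar‖) + t * (lam * ∑ g ∈ G, ‖padL g y‖) := by
              ring
      have hip : ⟪gbar, (xbar + t•(y-xbar)) - xbar⟫ = t * ⟪gbar, y - xbar⟫ := by
        rw [add_sub_cancel_left, real_inner_smul_right]
      simp only [hDf]
      rw [hip]
      simp only [hr] at hrz ⊢
      linarith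
    have hSqt : Sq (t•(y-xbar)) = t^2 * Sq (y-xbar) := by
      simp only [hSqdef]
      rw [Finset.mul_sum]
      apply Finset.sum_congr rfl
      intro j _
      have hmvt : A.mulVec (t•(y-xbar) : EuclideanSpace ℝ (Fin n)) j = t * A.mulVec (y-xbar : EuclideanSpace ℝ (Fin n)) j := by
        rw [mulVec_coord A _ j, mulVec_coord A (y - xbar) j, Finset.mul_sum]
        apply Finset.sum_congr rfl
        intro i _
        have : (t•(y-xbar) : EuclideanSpace ℝ (Fin n)) i = t * (y-xbar : EuclideanSpace ℝ (Fin n)) i := rfl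
        rw [this]
        ring
      rw [hmvt]
      ring
    have hlow : -(t^2 * C) ≤ Df (xbar + t • (y - xbar)) := by
      have h1 := hmin (xbar + t•(y - xbar))
      have h2 := hkey (xbar + t•(y-xbar))
      rw [add_sub_cancel_left, hSqt] at h2
      have h3 : μ*(t^2*Sq (y-xbar)) = t^2*C := by rw [hC]; ring
      linarith
    have ht2 : t ≤ (-Df y)/(C+1) := min_le_right _ _
    have ht3 : t*(C+1) ≤ -Df y := by
      rw [← le_div_iff₀ (by linarith : (0:ℝ) < C+1)]
      exact ht2
    nlinarith
  -- the per-group master inequality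
  have hJ : ∀ g ∈ G, ∀ u : EuclideanSpace ℝ (Fin n),
      0 ≤ lam * ‖padL g u‖ + ⟪gbar, padL g u⟫
        - (lam * ‖padL g xbar‖ + ⟪gbar, padL g xbar⟫) := by
    intro g hg u
    have h0 := hD0 (xbar + (padL g u - padL g xbar))
    have hpadg : padL g (xbar + (padL g u - padL g xbar)) = padL g u := by
      rw [map_add, map_sub, padL_padL_eq, padL_padL_eq]
      abel
    have hpady : ∀ h' ∈ G, h' ≠ g → padL h' (xbar + (padL g u - padL g xbar)) = padL h' xbar := by
      intro h' hh' hne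
      rw [map_add, map_sub, padL_padL_disj (hdisj g hg h' hh' hne),
        padL_padL_disj (hdisj g hg h' hh' hne), sub_zero, add_zero]
    have hry : r (xbar + (padL g u - padL g xbar)) - r xbar
        = lam * (‖padL g u‖ - ‖padL g xbar‖) := by
      simp only [hr]
      rw [← mul_sub, ← Finset.sum_sub_distrib]
      congr 1
      rw [Finset.sum_eq_single g]
      · rw [hpadg]
      · intro h' hh' hne
        rw [hpady h' hh' hne, sub_self]
      · intro h
        exact absurd hg h
    have hdiff : (xbar + (padL g u - padL g xbar)) - xbar = padL g u - padL g xbar := by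
      abel
    have hipy : ⟪gbar, (xbar + (padL g u - padL g xbar)) - xbar⟫
        = ⟪gbar, padL g u⟫ - ⟪gbar, padL g xbar⟫ := by
      rw [hdiff, inner_sub_right]
    simp only [hDf] at h0
    rw [hipy] at h0
    linarith [hry, h0]
  set γ : Finset (Fin n) → EuclideanSpace ℝ (Fin n) := fun g => padL g gbar with hγdef
  have hγself : ∀ g, padL g (γ g) = γ g := fun g => padL_padL_eq g gbar
  have hinswap : ∀ g (w : EuclideanSpace ℝ (Fin n)), ⟪γ g, w⟫ = ⟪gbar, padL g w⟫ :=
    fun g w => padL_inner_swap g gbar w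
  have hγpad : ∀ g (w : EuclideanSpace ℝ (Fin n)), ⟪gbar, padL g w⟫ = ⟪γ g, padL g w⟫ := by
    intro g w
    rw [hinswap g (padL g w), padL_padL_eq]
  have hγγ : ∀ g, ⟪gbar, γ g⟫ = ‖γ g‖^2 := by
    intro g
    rw [real_inner_comm, hinswap g gbar, real_inner_comm, inner_padL,
      real_inner_self_eq_norm_sq]
  have hγle : ∀ g ∈ G, ‖γ g‖ ≤ lam := by
    intro g hg
    have h := hJ g hg (xbar - γ g)
    have hpad : padL g (xbar - γ g) = padL g xbar - γ g := by
      rw [map_sub, hγself]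
    rw [hpad] at h
    have htri : ‖padL g xbar - γ g‖ ≤ ‖padL g xbar‖ + ‖γ g‖ := norm_sub_le _ _
    have hiner : ⟪gbar, padL g xbar - γ g⟫ = ⟪gbar, padL g xbar⟫ - ‖γ g‖^2 := by
      rw [inner_sub_right, hγγ]
    rw [hiner] at h
    by_contra hgt
    push_neg at hgt
    nlinarith [norm_nonneg (γ g)]
  have hJ0 : ∀ g ∈ G, lam * ‖padL g xbar‖ + ⟪gbar, padL g xbar⟫ = 0 := by
    intro g hg
    have h1 := hJ g hg (xbar - padL g xbar)
    have hpad : padL g (xbar - padL g xbar) = 0 := by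
      rw [map_sub, padL_padL_eq, sub_self]
    rw [hpad] at h1
    rw [norm_zero, inner_zero_right] at h1
    have h2 : -(lam * ‖padL g xbar‖) ≤ ⟪gbar, padL g xbar⟫ := by
      rw [hγpad]
      have hcs := abs_real_inner_le_norm (γ g) (padL g xbar)
      have hn := neg_abs_le ⟪γ g, padL g xbar⟫
      have := hγle g hg
      nlinarith [norm_nonneg (padL g xbar)]
    linarith
  have halign : ∀ g ∈ G, ‖γ g‖ = lam →
      padL g xbar = (-(‖padL g xbar‖/lam)) • γ g := by
    intro g hg hcase
    have hz : ‖padL g xbar - (-(‖padL g xbar‖/lam)) • γ g‖^2 = 0 := by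
      rw [norm_sub_sq_real, real_inner_smul_right, norm_smul, Real.norm_eq_abs]
      have hip : ⟪padL g xbar, γ g⟫ = -(lam * ‖padL g xbar‖) := by
        rw [real_inner_comm, ← hγpad]
        have := hJ0 g hg
        linarith
      rw [hip, hcase]
      rw [abs_neg, abs_div, abs_of_nonneg (norm_nonneg (padL g xbar)), abs_of_pos hlam]
      field_simp
      ring
    have hzz : padL g xbar - (-(‖padL g xbar‖/lam)) • γ g = 0 := by
      have h2 : ‖padL g xbar - (-(‖padL g xbar‖/lam)) • γ g‖ = 0 := by
        have := sq_eq_zero_iff.mp hz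
        exact this
      exact norm_eq_zero.mp h2
    exact sub_eq_zero.mp hzz
  have hzero' : ∀ g ∈ G, ‖γ g‖ ≠ lam → padL g xbar = 0 := by
    intro g hg hne
    have hlt : ‖γ g‖ < lam := lt_of_le_of_ne (hγle g hg) hne
    have h1 := hJ0 g hg
    have h2 : -⟪gbar, padL g xbar⟫ ≤ ‖γ g‖ * ‖padL g xbar‖ := by
      rw [hγpad]
      have hcs := abs_real_inner_le_norm (γ g) (padL g xbar)
      have hn := neg_abs_le ⟪γ g, padL g xbar⟫
      linarith
    have h3 : ‖padL g xbar‖ ≤ 0 := by nlinarith [norm_nonneg (padL g xbar)]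
    exact norm_eq_zero.mp (le_antisymm h3 (norm_nonneg _))
  -- D of any point as a sum over groups
  have hBsum : ∀ y, ∑ g ∈ G, (lam * ‖padL g y‖ + ⟪γ g, padL g y⟫) = Df y := by
    intro y
    have hinnersum : ∀ v : EuclideanSpace ℝ (Fin n),
        ∑ g ∈ G, ⟪γ g, padL g v⟫ = ⟪gbar, v⟫ := by
      intro v
      calc ∑ g ∈ G, ⟪γ g, padL g v⟫ = ∑ g ∈ G, ⟪gbar, padL g v⟫ := by
            apply Finset.sum_congr rfl
            intro g _
            rw [← hγpad]
        _ = ⟪gbar, ∑ g ∈ G, padL g v⟫ := (inner_sum G (fun g => padL g v) gbar).symm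
        _ = ⟪gbar, v⟫ := by rw [padL_sum_eq v hG]
    have h0 : r xbar + ⟪gbar, xbar⟫ = 0 := by
      have hx0 : ∑ g ∈ G, (lam * ‖padL g xbar‖ + ⟪gbar, padL g xbar⟫) = 0 :=
        Finset.sum_eq_zero hJ0
      have : ∑ g ∈ G, (lam * ‖padL g xbar‖ + ⟪gbar, padL g xbar⟫)
          = r xbar + ⟪gbar, xbar⟫ := by
        rw [Finset.sum_add_distrib, ← Finset.mul_sum]
        have h2 : ∑ g ∈ G, ⟪gbar, padL g xbar⟫ = ⟪gbar, xbar⟫ := by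
          rw [← hinnersum xbar]
          apply Finset.sum_congr rfl
          intro g _
          rw [← hγpad]
        rw [h2, hr]
      linarith [hx0, this]
    have hsplit : ∑ g ∈ G, (lam * ‖padL g y‖ + ⟪γ g, padL g y⟫)
        = r y + ⟪gbar, y⟫ := by
      rw [Finset.sum_add_distrib, ← Finset.mul_sum, hinnersum y, hr]
    rw [hsplit]
    simp only [hDf]
    rw [inner_sub_right]
    linarith
  have hBnn : ∀ y, ∀ g ∈ G, 0 ≤ lam * ‖padL g y‖ + ⟪γ g, padL g y⟫ := by
    intro y g hg
    have h1 := hJ g hg y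
    have h2 := hJ0 g hg
    have h3 : ⟪γ g, padL g y⟫ = ⟪gbar, padL g y⟫ := (hγpad g y).symm
    linarith
  -- constants
  set M : ℝ := ‖xbar‖ + 1 with hM
  have hM1 : 1 ≤ M := by
    have := norm_nonneg xbar
    linarith
  set Kg : Finset (Fin n) → ℝ :=
    fun g => if ‖γ g‖ = lam then 2*M/lam else M/(lam - ‖γ g‖) with hKgdef
  have hKgpos : ∀ g ∈ G, 0 < Kg g := by
    intro g hg
    simp only [hKgdef]
    split
    · positivity
    · have : ‖γ g‖ < lam := lt_of_le_of_ne (hγle g hg) (by assumption)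
      have h2 : 0 < lam - ‖γ g‖ := by linarith
      positivity
  set K1 : ℝ := (∑ g ∈ G, Kg g) + 1 with hK1
  have hK1pos : 0 < K1 := by
    have : 0 ≤ ∑ g ∈ G, Kg g := Finset.sum_nonneg (fun g hg => (hKgpos g hg).le)
    rw [hK1]
    linarith
  have hKgle : ∀ g ∈ G, Kg g ≤ K1 := by
    intro g hg
    have := Finset.single_le_sum (f := Kg) (fun g' hg' => (hKgpos g' hg').le) hg
    rw [hK1]
    linarith
  set ρ : Finset (Fin n) → EuclideanSpace ℝ (Fin n) :=
    fun g => if ‖γ g‖ = lam then γ g else 0 with hρdef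
  set V : Submodule ℝ (EuclideanSpace ℝ (Fin n)) :=
    ⨅ g ∈ G, Submodule.comap (padL g) (Submodule.span ℝ {ρ g}) with hVdef
  have hVmem : ∀ d, d ∈ V ↔ ∀ g ∈ G, padL g d ∈ Submodule.span ℝ {ρ g} := by
    intro d
    simp only [hVdef, Submodule.mem_iInf, Submodule.mem_comap]
  set φf : Finset (Fin n) → (EuclideanSpace ℝ (Fin n) →ₗ[ℝ] ℝ) :=
    fun g => -(innerₛₗ ℝ (γ g)) with hφfdef
  have hφf : ∀ g d, φf g d = -⟪γ g, d⟫ := by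
    intro g d
    simp only [hφfdef, LinearMap.neg_apply, innerₛₗ_apply_apply]
  set G0 : Finset (Finset (Fin n)) := G.filter (fun g => padL g xbar = 0) with hG0
  obtain ⟨κ, hκpos, hHoff⟩ := hoffman (mulVecL A) φf V G0
  set CA : ℝ := ‖LinearMap.toContinuousLinearMap (mulVecL A)‖ with hCAdef
  have hCA : ∀ v, ‖mulVecL A v‖ ≤ CA * ‖v‖ := by
    intro v
    have h := (LinearMap.toContinuousLinearMap (mulVecL A)).le_opNorm v
    rwa [LinearMap.coe_toContinuousLinearMap'] at h
  have hCA0 : 0 ≤ CA := norm_nonneg _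
  set c2 : ℝ := CA * Real.sqrt K1 + Real.sqrt (1/μ) with hc2
  have hc20 : 0 ≤ c2 := by positivity
  set C3 : ℝ := μ * CA^2 + lam * (G.card : ℝ) + ‖gbar‖ + 1 with hC3
  have hC30 : 0 < C3 := by
    have := mul_nonneg hμ.le (sq_nonneg CA)
    have := mul_nonneg hlam.le (Nat.cast_nonneg (α := ℝ) G.card)
    have := norm_nonneg gbar
    linarith
  set Q0 : ℝ := (1 + κ*CA) * (Real.sqrt (K1 * C3) + 1) with hQ0
  have hQ00 : 0 < Q0 :=
    mul_pos (by linarith [mul_nonneg hκpos.le hCA0]) (by linarith [Real.sqrt_nonneg (K1*C3)])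
  set τ : ℝ := (insert (1:ℝ)
    ((G.filter (fun g => padL g xbar ≠ 0)).image (fun g => ‖padL g xbar‖))).min'
    ⟨1, Finset.mem_insert_self 1 _⟩ with hτdef
  have hτpos : 0 < τ := by
    rw [hτdef]
    apply (Finset.lt_min'_iff _ _).mpr
    intro y hy
    rcases Finset.mem_insert.mp hy with h | h
    · rw [h]; norm_num
    · obtain ⟨g, hg, hgy⟩ := Finset.mem_image.mp h
      rw [← hgy]
      exact norm_pos_iff.mpr (Finset.mem_filter.mp hg).2
  have hτle : ∀ g ∈ G, padL g xbar ≠ 0 → τ ≤ ‖padL g xbar‖ := by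
    intro g hg hne
    apply Finset.min'_le
    exact Finset.mem_insert_of_mem (Finset.mem_image_of_mem _ (Finset.mem_filter.mpr ⟨hg, hne⟩))
  set β : ℝ := Real.sqrt K1 + κ * c2 with hβ
  have hβpos : 0 < β := by
    have h1 : 0 < Real.sqrt K1 := Real.sqrt_pos.mpr hK1pos
    have h2 : 0 ≤ κ * c2 := mul_nonneg hκpos.le hc20
    linarith
  set ε : ℝ := min 1 ((τ / (Q0+1))^2) with hε
  have hεpos : 0 < ε := lt_min one_pos (pow_pos (div_pos hτpos (by linarith)) 2)
  have hε1 : ε ≤ 1 := min_le_left _ _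
  have hsqε : Real.sqrt ε ≤ τ/(Q0+1) := by
    rw [hε]
    calc Real.sqrt (min 1 ((τ / (Q0+1))^2)) ≤ Real.sqrt ((τ / (Q0+1))^2) :=
          Real.sqrt_le_sqrt (min_le_right _ _)
      _ = τ/(Q0+1) := Real.sqrt_sq (div_pos hτpos (by linarith)).le
  refine ⟨1/β, by positivity, ε, hεpos, ?_⟩
  intro x hx ξ hξ
  set Δ : ℝ := F x - F xbar with hΔdef
  have hΔ0 : 0 ≤ Δ := by rw [hΔdef]; linarith [hmin x]
  have hxnorm : ‖x‖ ≤ M := by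
    have hid : x = xbar + (x - xbar) := by abel
    calc ‖x‖ = ‖xbar + (x - xbar)‖ := by rw [← hid]
      _ ≤ ‖xbar‖ + ‖x - xbar‖ := norm_add_le _ _
      _ ≤ ‖xbar‖ + 1 := by linarith [hx.trans hε1]
  have hxM : ∀ g, ‖padL g x‖ ≤ M := fun g => (norm_padL_le g x).trans hxnorm
  -- per-group projections
  have hqex : ∀ g : Finset (Fin n), ∃ q : EuclideanSpace ℝ (Fin n), g ∈ G →
      ((∃ s : ℝ, q = s • γ g) ∧ (lam * ‖q‖ + ⟪γ g, q⟫ = 0) ∧ (⟪γ g, q⟫ ≤ 0) ∧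
        (‖γ g‖ ≠ lam → q = 0) ∧
        ‖padL g x - q‖^2 ≤ Kg g * (lam * ‖padL g x‖ + ⟪γ g, padL g x⟫)) := by
    intro g
    by_cases hg : g ∈ G
    · obtain ⟨q, hq1, hq2, hq3, hq4, hq5⟩ :=
        group_proj lam M hlam hM1 (γ g) (padL g x) (hγle g hg) (hxM g)
      exact ⟨q, fun _ => ⟨hq1, hq2, hq3, hq4, by simpa only [hKgdef] using hq5⟩⟩
    · exact ⟨0, fun h => absurd h hg⟩
  choose q hq using hqex
  set p : EuclideanSpace ℝ (Fin n) := ∑ g ∈ G, q g with hp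
  set d0 : EuclideanSpace ℝ (Fin n) := p - xbar with hd0
  have hqself : ∀ g ∈ G, padL g (q g) = q g := by
    intro g hg
    obtain ⟨s, hs⟩ := (hq g hg).1
    rw [hs, map_smul, hγself]
  have hpadp : ∀ g ∈ G, padL g p = q g := by
    intro g hg
    rw [hp, map_sum, Finset.sum_eq_single g]
    · exact hqself g hg
    · intro g' hg' hne
      obtain ⟨s, hs⟩ := (hq g' hg').1
      rw [hs, map_smul, hγdef]
      rw [padL_padL_disj (hdisj g' hg' g hg (Ne.symm hne)), smul_zero]
    · intro h
      exact absurd hg h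
  have hDxΔ : Df x ≤ Δ := by
    have h1 := hkey x
    have h2 := mul_nonneg hμ.le (hSqnn (x - xbar))
    rw [hΔdef]
    linarith
  have hxp : ‖x - p‖^2 ≤ K1 * Δ := by
    have hsplit : ‖x - p‖^2 = ∑ g ∈ G, ‖padL g (x - p)‖^2 := norm_sq_split _ hG
    have hterm : ∀ g ∈ G, ‖padL g (x - p)‖^2 ≤ Kg g * (lam * ‖padL g x‖ + ⟪γ g, padL g x⟫) := by
      intro g hg
      rw [map_sub, hpadp g hg]
      exact (hq g hg).2.2.2.2
    calc ‖x - p‖^2 = ∑ g ∈ G, ‖padL g (x - p)‖^2 := hsplit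
      _ ≤ ∑ g ∈ G, Kg g * (lam * ‖padL g x‖ + ⟪γ g, padL g x⟫) := Finset.sum_le_sum hterm
      _ ≤ ∑ g ∈ G, K1 * (lam * ‖padL g x‖ + ⟪γ g, padL g x⟫) :=
          Finset.sum_le_sum (fun g hg =>
            mul_le_mul_of_nonneg_right (hKgle g hg) (hBnn x g hg))
      _ = K1 * Df x := by rw [← Finset.mul_sum, hBsum x]
      _ ≤ K1 * Δ := mul_le_mul_of_nonneg_left hDxΔ hK1pos.le
  have hd0V : d0 ∈ V := by
    rw [hVmem]
    intro g hg
    rw [hd0, map_sub, hpadp g hg]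
    by_cases hcase : ‖γ g‖ = lam
    · obtain ⟨s, hs⟩ := (hq g hg).1
      have hxb := halign g hg hcase
      rw [hs, hxb]
      have hcomb : s • γ g - (-(‖padL g xbar‖/lam)) • γ g
          = (s + ‖padL g xbar‖/lam) • γ g := by
        rw [← sub_smul]
        congr 1
        ring
      rw [hcomb]
      have hργ : ρ g = γ g := if_pos hcase
      rw [hργ]
      exact Submodule.mem_span_singleton.mpr ⟨s + ‖padL g xbar‖/lam, rfl⟩
    · rw [(hq g hg).2.2.2.1 hcase, hzero' g hg hcase, sub_zero]
      exact Submodule.zero_mem _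
  have hd0φ : ∀ g ∈ G0, 0 ≤ φf g d0 := by
    intro g hg0
    obtain ⟨hg, hgz⟩ := Finset.mem_filter.mp hg0
    rw [hφf]
    have h1 : ⟪γ g, d0⟫ = ⟪γ g, q g⟫ := by
      rw [hinswap, hd0, map_sub, hpadp g hg, hgz, sub_zero, ← hqself g hg, ← hγpad,
        hqself g hg]
    rw [h1]
    linarith [(hq g hg).2.2.1]
  obtain ⟨e, heV, hTe, heφ, hele⟩ := hHoff d0 hd0V hd0φ
  -- quantitative bounds
  have hxps : ‖x - p‖ ≤ Real.sqrt (K1 * Δ) := by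
    rw [← Real.sqrt_sq (norm_nonneg (x - p))]
    exact Real.sqrt_le_sqrt hxp
  have hsqK1 : Real.sqrt (K1 * Δ) = Real.sqrt K1 * Real.sqrt Δ := Real.sqrt_mul hK1pos.le Δ
  have hTd0 : ‖mulVecL A d0‖ ≤ c2 * Real.sqrt Δ := by
    have hidd : d0 = (p - x) + (x - xbar) := by rw [hd0]; abel
    have h1 : ‖mulVecL A d0‖ ≤ ‖mulVecL A (p - x)‖ + ‖mulVecL A (x - xbar)‖ := by
      rw [hidd, map_add]
      exact norm_add_le _ _
    have h2 : ‖mulVecL A (p - x)‖ ≤ CA * (Real.sqrt K1 * Real.sqrt Δ) := by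
      refine (hCA (p - x)).trans ?_
      rw [norm_sub_rev]
      exact mul_le_mul_of_nonneg_left (hxps.trans_eq hsqK1) hCA0
    have h3 : ‖mulVecL A (x - xbar)‖ ≤ Real.sqrt (1/μ) * Real.sqrt Δ := by
      have h5 : μ * Sq (x - xbar) ≤ Δ := by
        have := hkey x
        have := hD0 x
        rw [hΔdef]
        linarith
      have h6 : Sq (x - xbar) ≤ (1/μ) * Δ := by
        rw [div_mul_eq_mul_div, le_div_iff₀ hμ]
        linarith
      have h7 : ‖mulVecL A (x - xbar)‖ = Real.sqrt (Sq (x - xbar)) := by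
        rw [norm_mulVecL]
      rw [h7, ← Real.sqrt_mul (by positivity : (0:ℝ) ≤ 1/μ) Δ]
      exact Real.sqrt_le_sqrt h6
    calc ‖mulVecL A d0‖ ≤ CA * (Real.sqrt K1 * Real.sqrt Δ) + Real.sqrt (1/μ) * Real.sqrt Δ := by
          linarith
      _ = c2 * Real.sqrt Δ := by rw [hc2]; ring
  have hΔε : Δ ≤ C3 * ε := by
    have hSqb : Sq (x - xbar) ≤ CA^2 * ε^2 := by
      have h7 : ‖mulVecL A (x - xbar)‖ = Real.sqrt (Sq (x - xbar)) := by rw [norm_mulVecL]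
      have h8 : Sq (x - xbar) = ‖mulVecL A (x - xbar)‖^2 := by
        rw [h7, Real.sq_sqrt (hSqnn _)]
      have h9 : ‖mulVecL A (x - xbar)‖ ≤ CA * ε :=
        (hCA _).trans (mul_le_mul_of_nonneg_left hx hCA0)
      rw [h8]
      calc ‖mulVecL A (x - xbar)‖^2 ≤ (CA*ε)^2 :=
            pow_le_pow_left₀ (norm_nonneg _) h9 2
        _ = CA^2 * ε^2 := by ring
    have hrb : r x - r xbar ≤ lam * (G.card : ℝ) * ε := by
      have hper : ∀ g ∈ G, ‖padL g x‖ - ‖padL g xbar‖ ≤ ε := by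
        intro g hg
        have h1 : ‖padL g x‖ - ‖padL g xbar‖ ≤ ‖padL g x - padL g xbar‖ :=
          norm_sub_norm_le _ _
        have h2 : padL g x - padL g xbar = padL g (x - xbar) := (map_sub (padL g) x xbar).symm
        rw [h2] at h1
        exact h1.trans ((norm_padL_le g (x - xbar)).trans hx)
      have hsum : ∑ g ∈ G, (‖padL g x‖ - ‖padL g xbar‖) ≤ ∑ _g ∈ G, ε :=
        Finset.sum_le_sum hper
      rw [Finset.sum_const, Finset.sum_sub_distrib, nsmul_eq_mul] at hsum
      simp only [hr]
      have := mul_le_mul_of_nonneg_left hsum hlam.le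
      calc lam * ∑ g ∈ G, ‖padL g x‖ - lam * ∑ g ∈ G, ‖padL g xbar‖
          = lam * (∑ g ∈ G, ‖padL g x‖ - ∑ g ∈ G, ‖padL g xbar‖) := by ring
        _ ≤ lam * ((G.card : ℝ) * ε) := this
        _ = lam * (G.card : ℝ) * ε := by ring
    have hipb : ⟪gbar, x - xbar⟫ ≤ ‖gbar‖ * ε := by
      refine (real_inner_le_norm gbar (x - xbar)).trans ?_
      exact mul_le_mul_of_nonneg_left hx (norm_nonneg _)
    have hkx := hkey x
    have hDfx : Df x = r x - r xbar + ⟪gbar, x - xbar⟫ := by simp only [hDf]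
    have hε2 : ε^2 ≤ ε := by nlinarith
    have hμSq : μ * Sq (x - xbar) ≤ μ * (CA^2 * ε^2) :=
      mul_le_mul_of_nonneg_left hSqb hμ.le
    have hq1 : (μ * CA^2) * ε^2 ≤ (μ * CA^2) * ε :=
      mul_le_mul_of_nonneg_left hε2 (mul_nonneg hμ.le (sq_nonneg CA))
    rw [hΔdef, hC3]
    linarith [hεpos.le]
  have hd0n : ‖d0‖ ≤ (Real.sqrt (K1*C3) + 1) * Real.sqrt ε := by
    have hidd : d0 = (p - x) + (x - xbar) := by rw [hd0]; abel
    have h1 : ‖d0‖ ≤ ‖x - p‖ + ‖x - xbar‖ := by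
      rw [hidd]
      refine (norm_add_le _ _).trans ?_
      rw [norm_sub_rev p x]
    have h2 : Real.sqrt (K1*Δ) ≤ Real.sqrt (K1*C3) * Real.sqrt ε := by
      have hKC : K1 * Δ ≤ (K1*C3) * ε := by
        calc K1 * Δ ≤ K1 * (C3 * ε) := mul_le_mul_of_nonneg_left hΔε hK1pos.le
          _ = (K1*C3) * ε := by ring
      refine (Real.sqrt_le_sqrt hKC).trans_eq ?_
      rw [Real.sqrt_mul (mul_pos hK1pos hC30).le ε]
    have h3 : ε ≤ Real.sqrt ε := by
      have h := Real.sqrt_le_sqrt (show ε^2 ≤ ε by nlinarith)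
      rwa [Real.sqrt_sq hεpos.le] at h
    calc ‖d0‖ ≤ ‖x - p‖ + ‖x - xbar‖ := h1
      _ ≤ Real.sqrt (K1*Δ) + ε := add_le_add hxps hx
      _ ≤ Real.sqrt (K1*C3) * Real.sqrt ε + Real.sqrt ε := add_le_add h2 h3
      _ = (Real.sqrt (K1*C3) + 1) * Real.sqrt ε := by ring
  have heb : ‖e‖ < τ := by
    have h1 : ‖e‖ ≤ ‖d0‖ + ‖d0 - e‖ := by
      have : e = d0 - (d0 - e) := by abel
      calc ‖e‖ = ‖d0 - (d0 - e)‖ := by rw [← this]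
        _ ≤ ‖d0‖ + ‖d0 - e‖ := norm_sub_le _ _
    have h2 : ‖d0 - e‖ ≤ κ * (CA * ‖d0‖) :=
      hele.trans (mul_le_mul_of_nonneg_left (hCA d0) hκpos.le)
    have h3 : ‖e‖ ≤ (1 + κ*CA) * ‖d0‖ := by nlinarith
    have h4 : ‖e‖ ≤ Q0 * Real.sqrt ε := by
      rw [hQ0]
      calc ‖e‖ ≤ (1 + κ*CA) * ‖d0‖ := h3
        _ ≤ (1 + κ*CA) * ((Real.sqrt (K1*C3) + 1) * Real.sqrt ε) := by
            refine mul_le_mul_of_nonneg_left hd0n ?_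
            positivity
        _ = (1 + κ*CA) * (Real.sqrt (K1 * C3) + 1) * Real.sqrt ε := by ring
    have h5 : Q0 * Real.sqrt ε ≤ Q0 * (τ/(Q0+1)) :=
      mul_le_mul_of_nonneg_left hsqε hQ00.le
    have h6 : Q0 * (τ/(Q0+1)) < τ := by
      rw [mul_div_assoc']
      rw [div_lt_iff₀ (by linarith)]
      nlinarith
    linarith
  -- the comparison minimizer z
  set z : EuclideanSpace ℝ (Fin n) := xbar + e with hzdef
  have hzsub : z - xbar = e := by rw [hzdef]; abel
  have hSqe : Sq e = 0 := by
    simp only [hSqdef]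
    apply Finset.sum_eq_zero
    intro j _
    have h1 : A.mulVec e j = mulVecL A e j := rfl
    have h2 : mulVecL A e j = (0 : EuclideanSpace ℝ (Fin m)) j := by rw [hTe]
    rw [h1, h2]
    norm_num
  have hDz : Df z = 0 := by
    rw [← hBsum z]
    apply Finset.sum_eq_zero
    intro g hg
    have hpadz : padL g z = padL g xbar + padL g e := by rw [hzdef, map_add]
    have hspan := (hVmem e).mp heV g hg
    by_cases hcase : ‖γ g‖ = lam
    · have hργ : ρ g = γ g := if_pos hcase
      rw [hργ] at hspan
      obtain ⟨se, hse⟩ := Submodule.mem_span_singleton.mp hspan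
      have hxb := halign g hg hcase
      have hcomb : padL g z = (se - ‖padL g xbar‖/lam) • γ g := by
        conv_lhs => rw [hpadz, hxb, ← hse]
        rw [← add_smul]
        congr 1
        ring
      have hγpos : 0 < ‖γ g‖ := by rw [hcase]; exact hlam
      have ha : se - ‖padL g xbar‖/lam ≤ 0 := by
        by_cases ht : padL g xbar = 0
        · have hg0 : g ∈ G0 := Finset.mem_filter.mpr ⟨hg, ht⟩
          have hsign := heφ g hg0
          rw [hφf] at hsign
          have hip : ⟪γ g, e⟫ = se * ‖γ g‖^2 := by
            calc ⟪γ g, e⟫ = ⟪gbar, padL g e⟫ := hinswap g e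
              _ = ⟪gbar, se • γ g⟫ := by rw [hse]
              _ = se * ⟪gbar, γ g⟫ := real_inner_smul_right _ _ _
              _ = se * ‖γ g‖^2 := by rw [hγγ]
            
          have hse0 : se ≤ 0 := by
            rw [hip] at hsign
            by_contra hpos'
            push_neg at hpos'
            have hq2 : 0 < se * ‖γ g‖^2 := mul_pos hpos' (pow_pos hγpos 2)
            linarith
          have ht0 : ‖padL g xbar‖ = 0 := by rw [ht, norm_zero]
          rw [ht0]
          have : (0:ℝ)/lam = 0 := zero_div lam
          rw [this]
          linarith
        · have htpos : 0 < ‖padL g xbar‖ := norm_pos_iff.mpr ht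
          have hτt : τ ≤ ‖padL g xbar‖ := hτle g hg ht
          have hpe : ‖padL g e‖ ≤ ‖e‖ := norm_padL_le g e
          have hpen : ‖padL g e‖ = |se| * lam := by
            rw [← hse, norm_smul, Real.norm_eq_abs, hcase]
          have hlt : |se| * lam < ‖padL g xbar‖ := by
            rw [← hpen]
            linarith
          have h6 : se ≤ |se| := le_abs_self se
          have h7 : se * lam ≤ |se| * lam := mul_le_mul_of_nonneg_right h6 hlam.le
          rw [sub_nonpos, le_div_iff₀ hlam]
          linarith
      rw [hcomb, norm_smul, real_inner_smul_right, real_inner_self_eq_norm_sq, hcase,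
        Real.norm_eq_abs, abs_of_nonpos ha]
      ring
    · have hρ0 : ρ g = (0 : EuclideanSpace ℝ (Fin n)) := if_neg hcase
      rw [hρ0] at hspan
      obtain ⟨se, hse⟩ := Submodule.mem_span_singleton.mp hspan
      have hpe0 : padL g e = 0 := by rw [← hse, smul_zero]
      rw [hpadz, hzero' g hg hcase, hpe0, add_zero, norm_zero, inner_zero_right]
      ring
  have hFz : F z = F xbar := by
    have hk := hkey z
    rw [hzsub, hSqe, hDz] at hk
    linarith
  -- final chain
  have hxz : ‖x - z‖ ≤ β * Real.sqrt Δ := by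
    have hidd : x - z = (x - p) + (d0 - e) := by rw [hzdef, hd0]; abel
    have h1 : ‖x - z‖ ≤ ‖x - p‖ + ‖d0 - e‖ := by
      rw [hidd]
      exact norm_add_le _ _
    have h2 : ‖d0 - e‖ ≤ κ * (c2 * Real.sqrt Δ) :=
      hele.trans (mul_le_mul_of_nonneg_left hTd0 hκpos.le)
    calc ‖x - z‖ ≤ ‖x - p‖ + ‖d0 - e‖ := h1
      _ ≤ Real.sqrt K1 * Real.sqrt Δ + κ * (c2 * Real.sqrt Δ) := by
          refine add_le_add (hxps.trans_eq hsqK1) h2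
      _ = β * Real.sqrt Δ := by rw [hβ]; ring
  have h1 := hξ z
  rw [hFz] at h1
  have h3 : ⟪ξ, z - x⟫ = -⟪ξ, x - z⟫ := by rw [← inner_neg_right, neg_sub]
  have h4 : Δ ≤ ⟪ξ, x - z⟫ := by
    rw [h3] at h1
    rw [hΔdef]
    linarith
  have h5 : ⟪ξ, x - z⟫ ≤ ‖ξ‖ * ‖x - z‖ := real_inner_le_norm _ _
  have hfin : Δ ≤ ‖ξ‖ * (β * Real.sqrt Δ) :=
    h4.trans (h5.trans (mul_le_mul_of_nonneg_left hxz (norm_nonneg _)))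
  by_cases hΔsz : Real.sqrt Δ = 0
  · rw [hΔsz, mul_zero]
    exact norm_nonneg ξ
  · have hΔspos : 0 < Real.sqrt Δ :=
      lt_of_le_of_ne (Real.sqrt_nonneg Δ) (Ne.symm hΔsz)
    have h6 : Real.sqrt Δ * Real.sqrt Δ ≤ (‖ξ‖ * β) * Real.sqrt Δ := by
      rw [Real.mul_self_sqrt hΔ0]
      have hring : (‖ξ‖ * β) * Real.sqrt Δ = ‖ξ‖ * (β * Real.sqrt Δ) := by ring
      linarith
    have h7 : Real.sqrt Δ ≤ ‖ξ‖ * β := le_of_mul_le_mul_right h6 hΔspos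
    have h8 := mul_le_mul_of_nonneg_left h7 (by positivity : (0:ℝ) ≤ 1/β)
    have h9 : 1/β * (‖ξ‖ * β) = ‖ξ‖ := by field_simp
    linarith
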